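/- There exists a group G of order 48 with a normal subgroup N of index 2 isomorphic to SL(2,3) such that no subgroup of G is a complement to N; that is, G is a nonsplit extension of SL(2,3) by a cyclic group of order 2 (the binary octahedral group ⟨2,3,4⟩). -/

import Mathlib

/-- The field with 9 elements, realized as `ZMod 3` with a square root of `-1` adjoined. -/
structure F9 where
  re : ZMod 3
  im : ZMod 3
deriving DecidableEq, Fintype

namespace F9

instance : Zero F9 := ⟨⟨0, 0⟩⟩
instance : One F9 := ⟨⟨1, 0⟩⟩
instance : Add F9 := ⟨fun a b => ⟨a.re + b.re, a.im + b.im⟩⟩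
instance : Mul F9 := ⟨fun a b => ⟨a.re * b.re - a.im * b.im, a.re * b.im + a.im * b.re⟩⟩
instance : Neg F9 := ⟨fun a => ⟨-a.re, -a.im⟩⟩

theorem ext' {a b : F9} (h1 : a.re = b.re) (h2 : a.im = b.im) : a = b := by
  cases a; cases b; cases h1; cases h2; rfl

theorem mul_re' (a b : F9) : (a * b).re = a.re * b.re - a.im * b.im := rfl
theorem mul_im' (a b : F9) : (a * b).im = a.re * b.im + a.im * b.re := rfl
theorem add_re' (a b : F9) : (a + b).re = a.re + b.re := rfl
theorem add_im' (a b : F9) : (a + b).im = a.im + b.im := rfl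

instance : CommRing F9 where
  nsmul := nsmulRec
  zsmul := zsmulRec
  add_assoc a b c := ext' (add_assoc _ _ _) (add_assoc _ _ _)
  zero_add a := ext' (zero_add _) (zero_add _)
  add_zero a := ext' (add_zero _) (add_zero _)
  add_comm a b := ext' (add_comm _ _) (add_comm _ _)
  mul_assoc a b c := ext' (by simp only [mul_re', mul_im']; ring)
    (by simp only [mul_re', mul_im']; ring)
  one_mul a := ext' (by show 1 * a.re - 0 * a.im = a.re; ring)
    (by show 1 * a.im + 0 * a.re = a.im; ring)
  mul_one a := ext' (by show a.re * 1 - a.im * 0 = a.re; ring)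
    (by show a.re * 0 + a.im * 1 = a.im; ring)
  left_distrib a b c := ext' (by simp only [mul_re', mul_im', add_re', add_im']; ring)
    (by simp only [mul_re', mul_im', add_re', add_im']; ring)
  right_distrib a b c := ext' (by simp only [mul_re', mul_im', add_re', add_im']; ring)
    (by simp only [mul_re', mul_im', add_re', add_im']; ring)
  mul_comm a b := ext' (by simp only [mul_re', mul_im']; ring)
    (by simp only [mul_re', mul_im']; ring)
  neg_add_cancel a := ext' (neg_add_cancel _) (neg_add_cancel _)
  zero_mul a := ext' (by show 0 * a.re - 0 * a.im = 0; ring)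
    (by show 0 * a.im + 0 * a.re = 0; ring)
  mul_zero a := ext' (by show a.re * 0 - a.im * 0 = 0; ring)
    (by show a.re * 0 + a.im * 0 = 0; ring)

/-- Conjugation (the Frobenius) on `F9`. -/
def conj : F9 →+* F9 where
  toFun a := ⟨a.re, -a.im⟩
  map_one' := by decide
  map_mul' := by decide
  map_zero' := by decide
  map_add' := by decide

/-- The inclusion of `ZMod 3` into `F9`. -/
def ofZMod : ZMod 3 →+* F9 where
  toFun a := ⟨a, 0⟩
  map_one' := rfl
  map_mul' := by decide
  map_zero' := rfl
  map_add' := by decide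

theorem ofZMod_injective : Function.Injective ofZMod :=
  fun _ _ h => congrArg F9.re h

end F9

abbrev SL9 := Matrix.SpecialLinearGroup (Fin 2) F9
abbrev SL3 := Matrix.SpecialLinearGroup (Fin 2) (ZMod 3)

instance : DecidableEq SL9 := fun a b =>
  decidable_of_iff ((a : Matrix (Fin 2) (Fin 2) F9) = b) Subtype.ext_iff.symm
instance : DecidableEq SL3 := fun a b =>
  decidable_of_iff ((a : Matrix (Fin 2) (Fin 2) (ZMod 3)) = b) Subtype.ext_iff.symm

/-- Entrywise Frobenius on `SL(2,9)`. -/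
abbrev mσ : SL9 →* SL9 := Matrix.SpecialLinearGroup.map F9.conj

abbrev f0 : SL3 →* SL9 := Matrix.SpecialLinearGroup.map F9.ofZMod

/-- `-1` in SL(2,9). -/
def z : SL9 := ⟨-1, by simp [Matrix.det_neg]⟩

def uMat : Matrix (Fin 2) (Fin 2) F9 := !![(⟨0,1⟩ : F9), 0; 0, ⟨0,-1⟩]

/-- `diag(i, -i)` in SL(2,9). -/
def u : SL9 := ⟨uMat, by decide⟩

theorem z_comm (x : SL9) : z * x = x * z := by
  apply Subtype.ext
  show (-1 : Matrix (Fin 2) (Fin 2) F9) * (x : Matrix (Fin 2) (Fin 2) F9)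
      = (x : Matrix (Fin 2) (Fin 2) F9) * (-1)
  rw [neg_one_mul, mul_neg_one]

theorem z_mul_z : z * z = 1 := by decide

theorem z_inv : z⁻¹ = z := inv_eq_of_mul_eq_one_right z_mul_z

theorem mσ_u : mσ u = z * u := by decide

theorem z_ne_one : z ≠ 1 := by decide

/-- The binary octahedral group as a subgroup of `SL(2,9)`. -/
def G : Subgroup SL9 where
  carrier := {A | mσ A = A ∨ mσ A = z * A}
  one_mem' := Or.inl (map_one mσ)
  mul_mem' := by
    rintro a b (ha | ha) (hb | hb)
    · exact Or.inl (by rw [map_mul, ha, hb])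
    · exact Or.inr (by rw [map_mul, ha, hb, ← mul_assoc, ← z_comm, mul_assoc])
    · exact Or.inr (by rw [map_mul, ha, hb, mul_assoc])
    · refine Or.inl ?_
      rw [map_mul, ha, hb, mul_assoc, ← mul_assoc a z b, ← z_comm, mul_assoc,
        ← mul_assoc, z_mul_z, one_mul]
  inv_mem' := by
    rintro a (ha | ha)
    · exact Or.inl (by rw [map_inv, ha])
    · refine Or.inr ?_
      rw [map_inv, ha, mul_inv_rev, z_inv, ← z_comm]

/-- The subgroup of `SL(2,9)` fixed by the Frobenius, i.e. a copy of `SL(2,3)`. -/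
def N' : Subgroup SL9 where
  carrier := {A | mσ A = A}
  one_mem' := map_one mσ
  mul_mem' := by intro a b ha hb; show mσ _ = _; rw [map_mul, ha, hb]
  inv_mem' := by intro a ha; show mσ _ = _; rw [map_inv, ha]

def N : Subgroup G := N'.subgroupOf G

theorem f0_fix (B : SL3) : mσ (f0 B) = f0 B := by
  apply Subtype.ext
  show ((B : Matrix (Fin 2) (Fin 2) (ZMod 3)).map F9.ofZMod).map F9.conj
      = (B : Matrix (Fin 2) (Fin 2) (ZMod 3)).map F9.ofZMod
  ext i j
  simp only [Matrix.map_apply]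
  exact F9.ext' rfl (by show -(0 : ZMod 3) = 0; simp)

theorem f0_injective : Function.Injective f0 := by
  intro A B h
  apply Subtype.ext
  ext i j
  have h2 := congrArg (fun X : SL9 => (X : Matrix (Fin 2) (Fin 2) F9) i j) h
  simp only [Matrix.SpecialLinearGroup.map_apply_coe, RingHom.mapMatrix_apply,
    Matrix.map_apply] at h2
  exact F9.ofZMod_injective h2

theorem f0_surj_N' (A : SL9) (hA : mσ A = A) : ∃ B : SL3, f0 B = A := by
  have him : ∀ i j, ((A : Matrix (Fin 2) (Fin 2) F9) i j).im = 0 := by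
    intro i j
    have h3 : -((A : Matrix (Fin 2) (Fin 2) F9) i j).im
        = ((A : Matrix (Fin 2) (Fin 2) F9) i j).im :=
      congrArg (fun X : SL9 => ((X : Matrix (Fin 2) (Fin 2) F9) i j).im) hA
    revert h3
    generalize ((A : Matrix (Fin 2) (Fin 2) F9) i j).im = x
    revert x; decide
  set BM : Matrix (Fin 2) (Fin 2) (ZMod 3) :=
    fun i j => ((A : Matrix (Fin 2) (Fin 2) F9) i j).re with hBM
  have hmap : BM.map F9.ofZMod = (A : Matrix (Fin 2) (Fin 2) F9) := by
    ext i j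
    exact F9.ext' rfl ((him i j).symm)
  have hdet : BM.det = 1 := by
    apply F9.ofZMod_injective
    rw [RingHom.map_det, RingHom.mapMatrix_apply, hmap, map_one]
    exact A.2
  exact ⟨⟨BM, hdet⟩, Subtype.ext hmap⟩

theorem u_mem_G : u ∈ G := Or.inr mσ_u

def uG : G := ⟨u, u_mem_G⟩

/-- Key fact: no element of `G` outside of `N` squares to `1`. -/
theorem key2 : ∀ B : SL3, (u * f0 B) * (u * f0 B) ≠ 1 := by decide

theorem mem_N_iff' (b : G) : b ∈ N ↔ mσ (b : SL9) = b :=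
  Subgroup.mem_subgroupOf

theorem N_normal : N.Normal := by
  constructor
  intro n hn g
  rw [mem_N_iff'] at hn ⊢
  have hcoe : ((g * n * g⁻¹ : G) : SL9) = (g : SL9) * n * (g : SL9)⁻¹ := by
    push_cast; rfl
  show mσ _ = _
  rw [hcoe]
  rcases g.2 with hg | hg
  · rw [map_mul, map_mul, map_inv, hg, hn]
  · rw [map_mul, map_mul, map_inv, hg, hn, mul_inv_rev, z_inv]
    calc z * (g : SL9) * (n : SL9) * ((g : SL9)⁻¹ * z)
        = z * ((g : SL9) * n * (g : SL9)⁻¹) * z := by group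
      _ = ((g : SL9) * n * (g : SL9)⁻¹) * z * z := by rw [z_comm]
      _ = (g : SL9) * n * (g : SL9)⁻¹ * 1 := by rw [mul_assoc _ z z, z_mul_z]
      _ = (g : SL9) * n * (g : SL9)⁻¹ := by rw [mul_one]


theorem N_index : N.index = 2 := by
  rw [Subgroup.index_eq_two_iff]
  refine ⟨uG, fun b => ?_⟩
  have hmemN2 : b * uG ∈ N ↔ mσ (b : SL9) = z * b := by
    rw [mem_N_iff']
    have hcoe : ((b * uG : G) : SL9) = (b : SL9) * u := rfl
    rw [hcoe, map_mul, mσ_u]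
    constructor
    · intro h
      have h2 : mσ (b : SL9) * z = (b : SL9) := by
        apply mul_right_cancel (b := u)
        rw [mul_assoc]
        exact h
      calc mσ (b : SL9) = mσ (b : SL9) * z * z := by
            rw [mul_assoc, z_mul_z, mul_one]
        _ = (b : SL9) * z := by rw [h2]
        _ = z * (b : SL9) := (z_comm _).symm
    · intro h
      rw [h, ← mul_assoc]
      have : z * (b : SL9) * z = (b : SL9) := by
        rw [z_comm, mul_assoc, z_mul_z, mul_one]
      rw [this]
  rcases b.2 with hb | hb
  · refine Or.inr ⟨(mem_N_iff' b).mpr hb, fun hc => ?_⟩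
    rw [hmemN2, hb] at hc
    exact z_ne_one (mul_eq_right.mp hc.symm)
  · refine Or.inl ⟨hmemN2.mpr hb, fun hc => ?_⟩
    rw [mem_N_iff', hb] at hc
    exact z_ne_one (mul_eq_right.mp hc)

def f1 : SL3 →* G := f0.codRestrict G (fun B => Or.inl (f0_fix B))

def f2 : SL3 →* N := f1.codRestrict N (fun B => (mem_N_iff' (f1 B)).mpr (f0_fix B))

theorem f2_bijective : Function.Bijective f2 := by
  constructor
  · intro a b h
    exact f0_injective (congrArg (fun x : N => ((x : G) : SL9)) h)
  · rintro ⟨⟨A, hAG⟩, hAN⟩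
    rw [mem_N_iff'] at hAN
    obtain ⟨B, hB⟩ := f0_surj_N' A hAN
    exact ⟨B, Subtype.ext (Subtype.ext hB)⟩

noncomputable def e : SL3 ≃* N := MulEquiv.ofBijective f2 f2_bijective

theorem card_SL3 : Nat.card SL3 = 24 := by
  rw [Nat.card_eq_fintype_card]; decide

theorem card_N : Nat.card N = 24 := by
  rw [← Nat.card_congr e.toEquiv]; exact card_SL3

theorem card_G : Nat.card G = 48 := by
  have h := Subgroup.card_mul_index N
  rw [card_N, N_index] at h
  omega

/-- There exists a group of order 48 with a normal subgroup of index 2 isomorphic to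
`SL(2,3)` that has no complement: a nonsplit extension of `SL(2,3)` by `C2`
(the binary octahedral group `⟨2,3,4⟩`). -/
theorem exists_nonsplit_extension_SL23_by_C2 :
    ∃ (G : Type) (_ : Group G) (N : Subgroup G),
      Nat.card G = 48 ∧ N.Normal ∧ N.index = 2 ∧
      Nonempty (N ≃* Matrix.SpecialLinearGroup (Fin 2) (ZMod 3)) ∧
      ∀ H : Subgroup G, ¬ Subgroup.IsComplement' N H := by
  refine ⟨G, inferInstance, N, card_G, N_normal, N_index, ⟨e.symm⟩, ?_⟩
  intro H h
  have hcard := h.card_mul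
  rw [card_N, card_G] at hcard
  have hH : Nat.card H = 2 := by omega
  rcases H.bot_or_exists_ne_one with rfl | ⟨x, hxH, hx1⟩
  · simp at hH
  · have hdvd : orderOf x ∣ 2 := by
      have := Subgroup.orderOf_dvd_natCard H hxH
      rwa [hH] at this
    have hord : orderOf x = 2 := by
      rcases (Nat.dvd_prime Nat.prime_two).mp hdvd with h1 | h2
      · exact absurd (orderOf_eq_one_iff.mp h1) hx1
      · exact h2
    have hx2 : x * x = 1 := by
      have := pow_orderOf_eq_one x
      rwa [hord, pow_two] at this
    -- x has order two, so it must lie in N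
    have hxN : x ∈ N := by
      rw [mem_N_iff']
      rcases x.2 with hx | hx
      · exact hx
      · exfalso
        have hmem : mσ (u⁻¹ * (x : SL9)) = u⁻¹ * x := by
          rw [map_mul, map_inv, mσ_u, hx, mul_inv_rev]
          rw [mul_assoc, ← mul_assoc z⁻¹ z (x : SL9), z_inv, z_mul_z, one_mul]
        obtain ⟨B, hB⟩ := f0_surj_N' _ hmem
        have hxu : (x : SL9) = u * f0 B := by
          rw [hB, ← mul_assoc, mul_inv_cancel, one_mul]
        have hx2' : ((x : G) : SL9) * ((x : G) : SL9) = 1 := by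
          have := congrArg (fun y : G => (y : SL9)) hx2
          push_cast at this
          exact this
        rw [hxu] at hx2'
        exact key2 B hx2'
    have hbot : x ∈ (⊥ : Subgroup G) :=
      h.disjoint.le_bot (Subgroup.mem_inf.mpr ⟨hxN, hxH⟩)
    exact hx1 (Subgroup.mem_bot.mp hbot)
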